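/- In a finite episodic MDP with differentiable parameterized policy π_θ, for any function Q̃^{π_θ}: S×A → ℝ (possibly depending on θ differentiably) with Ṽ^{π_θ}(s) = Σ_a π_θ(a|s) Q̃^{π_θ}(s,a), the DR-PG estimator Σ_{t=0}^T { ∇_θ log π_θ(a_t|s_t) [Σ_{t1=t}^T γ^{t1} r_{t1} + Σ_{t2=t+1}^T γ^{t2}(Ṽ^{π_θ}(s_{t2}) − Q̃^{π_θ}(s_{t2},a_{t2}))] + γ^t (∇_θ Ṽ^{π_θ}(s_t) − ∇_θ Q̃^{π_θ}(s_t,a_t) − Q̃^{π_θ}(s_t,a_t) ∇_θ log π_θ(a_t|s_t)) } is an unbiased estimator of ∇_θ J(π_θ) on on-policy trajectories, where ∇_θ Ṽ^{π_θ}(s) = ∇_θ Σ_a π_θ(a|s) Q̃^{π_θ}(s,a) differentiates both the policy and Q̃. -/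

import Mathlib

open Finset

/-- A finite episodic MDP `M = (S, A, P, R, T, γ, s₀)` with finitely supported
reward distribution: `Rd s a` is a distribution over reward outcomes `Rw`,
whose real value is `rval`. -/
structure FinMDP (S A Rw : Type) where
  T : ℕ
  γ : ℝ
  s0 : S
  P : S → A → S → ℝ
  Rd : S → A → Rw → ℝ
  rval : Rw → ℝ

variable {S A Rw : Type} [Fintype S] [Fintype A] [Fintype Rw] [DecidableEq S] [DecidableEq A]

/-- `π s a` is a probability distribution over actions for each state. -/
def IsPolicy (π : S → A → ℝ) : Prop := (∀ s a, 0 ≤ π s a) ∧ (∀ s, ∑ a, π s a = 1)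

namespace FinMDP

/-- the transition and reward functions are genuine probability distributions. -/
def Valid (M : FinMDP S A Rw) : Prop :=
  (∀ s a s', 0 ≤ M.P s a s') ∧ (∀ s a, ∑ s', M.P s a s' = 1) ∧
  (∀ s a r, 0 ≤ M.Rd s a r) ∧ (∀ s a, ∑ r, M.Rd s a r = 1)

/-- a trajectory `s₀, a₀, r₀, …, s_T, a_T, r_T, s_{T+1}`. -/
def Traj (M : FinMDP S A Rw) : Type :=
  (Fin (M.T + 2) → S) × (Fin (M.T + 1) → A) × (Fin (M.T + 1) → Rw)

instance (M : FinMDP S A Rw) : Fintype M.Traj :=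
  inferInstanceAs (Fintype (_ × _ × _))

variable (M : FinMDP S A Rw)

/-- state at time `t` (index clamped to the horizon). -/
def st (τ : M.Traj) (t : ℕ) : S := τ.1 ⟨min t (M.T + 1), by omega⟩

/-- action at time `t` (index clamped to the horizon). -/
def ac (τ : M.Traj) (t : ℕ) : A := τ.2.1 ⟨min t M.T, by omega⟩

/-- reward at time `t` (index clamped to the horizon). -/
def rew (τ : M.Traj) (t : ℕ) : ℝ := M.rval (τ.2.2 ⟨min t M.T, by omega⟩)

/-- probability of a trajectory when actions are taken according to `π`. -/
def prob (π : S → A → ℝ) (τ : M.Traj) : ℝ :=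
  (if M.st τ 0 = M.s0 then (1:ℝ) else 0) *
  ∏ t ∈ range (M.T + 1),
    (π (M.st τ t) (M.ac τ t) * M.Rd (M.st τ t) (M.ac τ t) (τ.2.2 ⟨min t M.T, by omega⟩) *
      M.P (M.st τ t) (M.ac τ t) (M.st τ (t + 1)))

/-- discounted return `Σ_{t=0}^T γ^t r_t` of a trajectory. -/
def ret (τ : M.Traj) : ℝ := ∑ t ∈ range (M.T + 1), M.γ ^ t * M.rew τ t

/-- expected return `J(π)`. -/
def J (π : S → A → ℝ) : ℝ := ∑ τ : M.Traj, M.prob π τ * M.ret τ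

end FinMDP

/-! ### Auxiliary chain machinery -/

set_option linter.unusedSectionVars false

section Chain

variable (M : FinMDP S A Rw) (π : S → A → ℝ)

/-- one-step weight -/
def mstep (s : S) (x : A × Rw × S) : ℝ := π s x.1 * M.Rd s x.1 x.2.1 * M.P s x.1 x.2.2

/-- chain state sequence -/
def csf {n : ℕ} (s : S) (f : Fin n → A × Rw × S) : ℕ → S
  | 0 => s
  | (t+1) => if h : t < n then (f ⟨t, h⟩).2.2 else s

/-- chain probability -/
def cpf {n : ℕ} (s : S) (f : Fin n → A × Rw × S) : ℝ :=
  ∏ i : Fin n, mstep M π (csf s f i) (f i)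

lemma csf_cons {n : ℕ} (s : S) (x : A × Rw × S) (g : Fin n → A × Rw × S) {t : ℕ}
    (ht : t < n) : csf s (Fin.cons x g) (t+1) = csf x.2.2 g t := by
  cases t with
  | zero => simp [csf]
  | succ u =>
      have hu : u < n := by omega
      have h1 : (⟨u+1, by omega⟩ : Fin (n+1)) = Fin.succ ⟨u, hu⟩ := rfl
      simp only [csf, dif_pos (show u + 1 < n + 1 by omega), dif_pos hu, h1, Fin.cons_succ]

lemma cpf_cons {n : ℕ} (s : S) (x : A × Rw × S) (g : Fin n → A × Rw × S) :
    cpf M π s (Fin.cons x g) = mstep M π s x * cpf M π x.2.2 g := by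
  unfold cpf
  rw [Fin.prod_univ_succ]
  congr 1
  refine Finset.prod_congr rfl fun i _ => ?_
  have h1 : ((Fin.succ i : Fin (n+1)) : ℕ) = (i : ℕ) + 1 := rfl
  rw [Fin.cons_succ, h1, csf_cons _ _ _ i.isLt]

lemma sum_fun_succ {X : Type*} [Fintype X] (n : ℕ) (h : (Fin (n+1) → X) → ℝ) :
    ∑ f : Fin (n+1) → X, h f = ∑ x : X, ∑ g : Fin n → X, h (Fin.cons x g) := by
  rw [← (Fin.consEquiv (fun _ : Fin (n+1) => X)).sum_comp h, Fintype.sum_prod_type]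
  rfl

lemma sum_cpf (hM : M.Valid) (hπ : IsPolicy π) :
    ∀ (n : ℕ) (s : S), ∑ f : Fin n → A × Rw × S, cpf M π s f = 1 := by
  intro n
  induction n with
  | zero =>
      intro s
      have h0 : ∀ f : Fin 0 → A × Rw × S, cpf M π s f = 1 := by
        intro f; simp [cpf]
      rw [Finset.sum_congr rfl fun f _ => h0 f, Finset.sum_const, nsmul_eq_mul, mul_one]
      norm_cast
  | succ n ih =>
      intro s
      rw [sum_fun_succ]
      have h1 : ∀ x : A × Rw × S, ∑ g : Fin n → A × Rw × S, cpf M π s (Fin.cons x g)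
          = mstep M π s x := by
        intro x
        simp only [cpf_cons]
        rw [← Finset.mul_sum, ih, mul_one]
      rw [Finset.sum_congr rfl fun x _ => h1 x]
      rw [Fintype.sum_prod_type]
      have h2 : ∀ a, ∑ y : Rw × S, mstep M π s (a, y) = π s a := by
        intro a
        rw [Fintype.sum_prod_type]
        have h3 : ∀ r, ∑ s' : S, mstep M π s (a, r, s') = π s a * M.Rd s a r := by
          intro r
          simp only [mstep]
          rw [← Finset.mul_sum, hM.2.1, mul_one]
        rw [Finset.sum_congr rfl fun r _ => h3 r, ← Finset.mul_sum, hM.2.2.2, mul_one]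
      rw [Finset.sum_congr rfl fun a _ => h2 a, hπ.2]

lemma master (hM : M.Valid) (hπ : IsPolicy π) (F : S → A → ℝ)
    (hF : ∀ s, ∑ a, π s a * F s a = 0) :
    ∀ (t n : ℕ) (ht : t < n) (s : S) (W : (Fin n → A × Rw × S) → ℝ),
      (∀ f g, (∀ i : Fin n, (i : ℕ) < t → f i = g i) → W f = W g) →
      ∑ f : Fin n → A × Rw × S, cpf M π s f * (W f * F (csf s f t) ((f ⟨t, ht⟩).1)) = 0 := by
  intro t
  induction t with
  | zero =>
      intro n ht s W hW
      obtain ⟨m, rfl⟩ : ∃ m, n = m + 1 := ⟨n - 1, by omega⟩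
      have hA : Nonempty A := by
        by_contra h
        rw [not_nonempty_iff] at h
        have := hπ.2 s
        rw [Finset.univ_eq_empty, Finset.sum_empty] at this
        norm_num at this
      have hRw : Nonempty Rw := by
        by_contra h
        rw [not_nonempty_iff] at h
        have := hM.2.2.2 s (Classical.arbitrary A)
        rw [Finset.univ_eq_empty, Finset.sum_empty] at this
        norm_num at this
      have hS : Nonempty S := ⟨s⟩
      set f₀ : Fin (m+1) → A × Rw × S := Classical.arbitrary _ with hf₀
      have hWc : ∀ f, W f = W f₀ := fun f => hW f f₀ (fun i hi => absurd hi (by omega))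
      rw [sum_fun_succ]
      have h1 : ∀ x : A × Rw × S, ∑ g : Fin m → A × Rw × S,
          cpf M π s (Fin.cons x g) *
            (W (Fin.cons x g) * F (csf s (Fin.cons x g) 0)
              ((((Fin.cons x g : Fin (m+1) → A × Rw × S)) ⟨0, ht⟩).1))
          = mstep M π s x * (W f₀ * F s x.1) := by
        intro x
        have h2 : ∀ g : Fin m → A × Rw × S,
            cpf M π s (Fin.cons x g) *
              (W (Fin.cons x g) * F (csf s (Fin.cons x g) 0)
                ((((Fin.cons x g : Fin (m+1) → A × Rw × S)) ⟨0, ht⟩).1))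
            = cpf M π x.2.2 g * (mstep M π s x * (W f₀ * F s x.1)) := by
          intro g
          have h3 : ((Fin.cons x g : Fin (m+1) → A × Rw × S) ⟨0, ht⟩) = x := rfl
          rw [cpf_cons, hWc, h3]
          show mstep M π s x * cpf M π x.2.2 g * (W f₀ * F s x.1) = _
          ring
        rw [Finset.sum_congr rfl fun g _ => h2 g, ← Finset.sum_mul, sum_cpf M π hM hπ, one_mul]
      rw [Finset.sum_congr rfl fun x _ => h1 x]
      rw [Fintype.sum_prod_type]
      have h4 : ∀ a, ∑ y : Rw × S, mstep M π s (a, y) * (W f₀ * F s a)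
          = π s a * F s a * W f₀ := by
        intro a
        rw [← Finset.sum_mul]
        have h5 : ∑ y : Rw × S, mstep M π s (a, y) = π s a := by
          rw [Fintype.sum_prod_type]
          have h3 : ∀ r, ∑ s' : S, mstep M π s (a, r, s') = π s a * M.Rd s a r := by
            intro r
            simp only [mstep]
            rw [← Finset.mul_sum, hM.2.1, mul_one]
          rw [Finset.sum_congr rfl fun r _ => h3 r, ← Finset.mul_sum, hM.2.2.2, mul_one]
        rw [h5]; ring
      rw [Finset.sum_congr rfl fun a _ => h4 a, ← Finset.sum_mul, hF, zero_mul]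
  | succ t ih =>
      intro n ht s W hW
      obtain ⟨m, rfl⟩ : ∃ m, n = m + 1 := ⟨n - 1, by omega⟩
      have htm : t < m := by omega
      rw [sum_fun_succ]
      have h1 : ∀ x : A × Rw × S, ∑ g : Fin m → A × Rw × S,
          cpf M π s (Fin.cons x g) *
            (W (Fin.cons x g) * F (csf s (Fin.cons x g) (t+1))
              ((((Fin.cons x g : Fin (m+1) → A × Rw × S)) ⟨t+1, ht⟩).1))
          = 0 := by
        intro x
        have key := ih m htm x.2.2 (fun g => W (Fin.cons x g)) (by
          intro g g' hg
          apply hW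
          intro i hi
          induction i using Fin.cases with
          | zero => simp
          | succ j =>
              simp only [Fin.cons_succ]
              exact hg j (by
                have : ((j.succ : Fin (m+1)) : ℕ) = (j : ℕ) + 1 := rfl
                omega))
        have h2 : ∀ g : Fin m → A × Rw × S,
            cpf M π s (Fin.cons x g) *
              (W (Fin.cons x g) * F (csf s (Fin.cons x g) (t+1))
                ((((Fin.cons x g : Fin (m+1) → A × Rw × S)) ⟨t+1, ht⟩).1))
            = mstep M π s x *
              (cpf M π x.2.2 g * ((fun g => W (Fin.cons x g)) g *
                F (csf x.2.2 g t) ((g ⟨t, htm⟩).1))) := by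
          intro g
          have h3 : ((Fin.cons x g : Fin (m+1) → A × Rw × S) ⟨t+1, ht⟩) = g ⟨t, htm⟩ := by
            have h4 : (⟨t+1, ht⟩ : Fin (m+1)) = Fin.succ ⟨t, htm⟩ := rfl
            rw [h4, Fin.cons_succ]
          rw [cpf_cons, csf_cons _ _ _ htm, h3]
          ring
        rw [Finset.sum_congr rfl fun g _ => h2 g, ← Finset.mul_sum, key, mul_zero]
      rw [Finset.sum_congr rfl fun x _ => h1 x, Finset.sum_const, smul_zero]

/-! ### Transfer to trajectories -/

/-- trajectories as initial state plus a chain of steps -/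
def trajEquiv : (S × (Fin (M.T + 1) → A × Rw × S)) ≃ M.Traj where
  toFun p := ⟨Fin.cons p.1 (fun i => (p.2 i).2.2), fun i => (p.2 i).1, fun i => (p.2 i).2.1⟩
  invFun τ := (τ.1 0, fun i => (τ.2.1 i, τ.2.2 i, τ.1 i.succ))
  left_inv p := by
    obtain ⟨s, f⟩ := p
    refine Prod.ext ?_ ?_
    · simp
    · funext i; simp
  right_inv τ := by
    obtain ⟨σ, α, ρ⟩ := τ
    refine Prod.ext ?_ rfl
    show Fin.cons (σ 0) (Fin.tail σ) = σ
    exact Fin.cons_self_tail σ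

lemma st_trajEquiv (s : S) (f : Fin (M.T + 1) → A × Rw × S) {t : ℕ} (ht : t ≤ M.T + 1) :
    M.st (trajEquiv M (s, f)) t = csf s f t := by
  simp only [FinMDP.st, trajEquiv, Equiv.coe_fn_mk]
  cases t with
  | zero => simp [csf]; rfl
  | succ u =>
      have hu : u < M.T + 1 := by omega
      have h1 : min (u+1) (M.T+1) = u+1 := by omega
      simp only [h1]
      have h2 : (⟨u+1, by omega⟩ : Fin (M.T+2)) = Fin.succ ⟨u, hu⟩ := rfl
      show (Fin.cons s (fun i => (f i).2.2) : Fin (M.T+2) → S) ⟨u+1, by omega⟩ = csf s f (u+1)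
      rw [h2, Fin.cons_succ]
      simp [csf, hu]

lemma ac_trajEquiv (s : S) (f : Fin (M.T + 1) → A × Rw × S) {t : ℕ} (ht : t ≤ M.T) :
    M.ac (trajEquiv M (s, f)) t = (f ⟨t, by omega⟩).1 := by
  simp only [FinMDP.ac, trajEquiv, Equiv.coe_fn_mk]
  have h1 : min t M.T = t := by omega
  simp [h1]
  rfl

lemma rew_trajEquiv (s : S) (f : Fin (M.T + 1) → A × Rw × S) {t : ℕ} (ht : t ≤ M.T) :
    M.rew (trajEquiv M (s, f)) t = M.rval ((f ⟨t, by omega⟩).2.1) := by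
  simp only [FinMDP.rew, trajEquiv, Equiv.coe_fn_mk]
  have h1 : min t M.T = t := by omega
  simp [h1]
  rfl

lemma prob_trajEquiv (s : S) (f : Fin (M.T + 1) → A × Rw × S) :
    M.prob π (trajEquiv M (s, f)) = (if s = M.s0 then 1 else 0) * cpf M π s f := by
  unfold FinMDP.prob
  have h0 : M.st (trajEquiv M (s, f)) 0 = s := st_trajEquiv M s f (by omega)
  rw [h0]
  congr 1
  set Ffun : ℕ → ℝ :=
    fun t => if h : t < M.T + 1 then mstep M π (csf s f t) (f ⟨t, h⟩) else 1 with hFfun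
  have step1 : ∀ t ∈ range (M.T + 1),
      π (M.st (trajEquiv M (s, f)) t) (M.ac (trajEquiv M (s, f)) t) *
          M.Rd (M.st (trajEquiv M (s, f)) t) (M.ac (trajEquiv M (s, f)) t)
            ((trajEquiv M (s, f)).2.2 ⟨min t M.T, by omega⟩) *
        M.P (M.st (trajEquiv M (s, f)) t) (M.ac (trajEquiv M (s, f)) t)
          (M.st (trajEquiv M (s, f)) (t + 1)) = Ffun t := by
    intro t htm
    have ht : t < M.T + 1 := mem_range.mp htm
    have hst : M.st (trajEquiv M (s, f)) t = csf s f t := st_trajEquiv M s f (by omega)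
    have hst' : M.st (trajEquiv M (s, f)) (t+1) = csf s f (t+1) := st_trajEquiv M s f (by omega)
    have hac : M.ac (trajEquiv M (s, f)) t = (f ⟨t, by omega⟩).1 := ac_trajEquiv M s f (by omega)
    have hrw : (trajEquiv M (s, f)).2.2 ⟨min t M.T, by omega⟩ = (f ⟨t, by omega⟩).2.1 := by
      simp only [trajEquiv, Equiv.coe_fn_mk]
      have h1 : min t M.T = t := by omega
      simp [h1]
      rfl
    rw [hst, hst', hac, hrw, hFfun]
    simp only [dif_pos ht, mstep, csf, dif_pos ht]
  rw [Finset.prod_congr rfl step1, ← Fin.prod_univ_eq_prod_range Ffun (M.T + 1)]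
  refine Finset.prod_congr rfl fun i _ => ?_
  rw [hFfun]
  simp [i.isLt]

lemma sum_traj (G : M.Traj → ℝ) :
    ∑ τ : M.Traj, M.prob π τ * G τ
      = ∑ f : Fin (M.T + 1) → A × Rw × S, cpf M π M.s0 f * G (trajEquiv M (M.s0, f)) := by
  rw [← Equiv.sum_comp (trajEquiv M) (fun τ => M.prob π τ * G τ), Fintype.sum_prod_type]
  have h1 : ∀ s : S, ∑ f : Fin (M.T + 1) → A × Rw × S,
      M.prob π (trajEquiv M (s, f)) * G (trajEquiv M (s, f))
      = if s = M.s0 then (∑ f : Fin (M.T + 1) → A × Rw × S,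
          cpf M π s f * G (trajEquiv M (s, f))) else 0 := by
    intro s
    split_ifs with h
    · refine Finset.sum_congr rfl fun f _ => ?_
      rw [prob_trajEquiv, if_pos h, one_mul]
    · refine Finset.sum_eq_zero fun f _ => ?_
      rw [prob_trajEquiv, if_neg h, zero_mul, zero_mul]
  rw [Finset.sum_congr rfl fun s _ => h1 s, Finset.sum_ite_eq' univ M.s0, if_pos (mem_univ _)]

/-- the key conditional-expectation lemma on trajectories -/
lemma exp_zero (hM : M.Valid) (hπ : IsPolicy π) {t : ℕ} (ht : t ≤ M.T)
    (W : M.Traj → ℝ)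
    (hW : ∀ τ τ' : M.Traj, (∀ i, i ≤ t → M.st τ i = M.st τ' i) →
        (∀ i, i < t → M.ac τ i = M.ac τ' i) → (∀ i, i < t → M.rew τ i = M.rew τ' i) →
        W τ = W τ')
    (F : S → A → ℝ) (hF : ∀ s, ∑ a, π s a * F s a = 0) :
    ∑ τ : M.Traj, M.prob π τ * (W τ * F (M.st τ t) (M.ac τ t)) = 0 := by
  rw [sum_traj]
  have ht' : t < M.T + 1 := by omega
  have h1 : ∀ f : Fin (M.T + 1) → A × Rw × S,
      cpf M π M.s0 f * (W (trajEquiv M (M.s0, f)) *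
        F (M.st (trajEquiv M (M.s0, f)) t) (M.ac (trajEquiv M (M.s0, f)) t))
      = cpf M π M.s0 f * ((fun f => W (trajEquiv M (M.s0, f))) f *
        F (csf M.s0 f t) ((f ⟨t, ht'⟩).1)) := by
    intro f
    rw [st_trajEquiv M _ f (by omega), ac_trajEquiv M _ f (by omega)]
  rw [Finset.sum_congr rfl fun f _ => h1 f]
  refine master M π hM hπ F hF t (M.T + 1) ht' M.s0 _ ?_
  intro f g hfg
  refine hW _ _ ?_ ?_ ?_
  · intro i hi
    rw [st_trajEquiv M _ f (by omega), st_trajEquiv M _ g (by omega)]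
    cases i with
    | zero => rfl
    | succ u =>
        have hu : u < M.T + 1 := by omega
        simp only [csf, dif_pos hu]
        rw [hfg ⟨u, hu⟩ (by simpa using by omega : ((⟨u, hu⟩ : Fin (M.T+1)) : ℕ) < t)]
  · intro i hi
    rw [ac_trajEquiv M _ f (by omega), ac_trajEquiv M _ g (by omega)]
    rw [hfg ⟨i, by omega⟩ (by simpa using hi)]
  · intro i hi
    rw [rew_trajEquiv M _ f (by omega), rew_trajEquiv M _ g (by omega)]
    rw [hfg ⟨i, by omega⟩ (by simpa using hi)]

end Chain
/-! ### The main theorem -/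

/-- the general DR-PG estimator, with a θ-dependent approximate
Q-function `Q̃^{π_θ}` and `Ṽ^{π_θ}(s) = Σ_a π_θ(a|s) Q̃^{π_θ}(s,a)`, is unbiased
for `∇_θ J(π_θ)` on on-policy trajectories; `∇_θ Ṽ` differentiates both the
policy and `Q̃`. -/
theorem drpg_unbiased (M : FinMDP S A Rw) (hM : M.Valid)
    {d : ℕ} (θ : Fin d → ℝ) (πf : (Fin d → ℝ) → S → A → ℝ)
    (hpol : ∀ θ', IsPolicy (πf θ'))
    (hpos : ∀ θ' s a, 0 < πf θ' s a)
    (hdiff : ∀ s a, Differentiable ℝ (fun θ' => πf θ' s a))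
    (Qt : (Fin d → ℝ) → S → A → ℝ)
    (hQdiff : ∀ s a, Differentiable ℝ (fun θ' => Qt θ' s a)) :
    ∑ τ : M.Traj, M.prob (πf θ) τ •
      (∑ t ∈ range (M.T + 1),
        (((∑ t1 ∈ Finset.Icc t M.T, M.γ ^ t1 * M.rew τ t1)
          + ∑ t2 ∈ Finset.Icc (t + 1) M.T, M.γ ^ t2 *
              ((∑ a, πf θ (M.st τ t2) a * Qt θ (M.st τ t2) a)
                - Qt θ (M.st τ t2) (M.ac τ t2))) •
          fderiv ℝ (fun θ' => Real.log (πf θ' (M.st τ t) (M.ac τ t))) θ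
        + M.γ ^ t •
          (fderiv ℝ (fun θ' => ∑ a, πf θ' (M.st τ t) a * Qt θ' (M.st τ t) a) θ
            - fderiv ℝ (fun θ' => Qt θ' (M.st τ t) (M.ac τ t)) θ
            - Qt θ (M.st τ t) (M.ac τ t) •
                fderiv ℝ (fun θ' => Real.log (πf θ' (M.st τ t) (M.ac τ t))) θ)))
      = fderiv ℝ (fun θ' => M.J (πf θ')) θ := by
  classical
  have hπ : IsPolicy (πf θ) := hpol θ
  -- derivative of log of the policy
  have hDlog : ∀ s a, HasFDerivAt (fun θ' => Real.log (πf θ' s a))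
      ((πf θ s a)⁻¹ • fderiv ℝ (fun θ' => πf θ' s a) θ) θ :=
    fun s a => ((hdiff s a) θ).hasFDerivAt.log (ne_of_gt (hpos θ s a))
  have hDL : ∀ s a, fderiv ℝ (fun θ' => Real.log (πf θ' s a)) θ
      = (πf θ s a)⁻¹ • fderiv ℝ (fun θ' => πf θ' s a) θ :=
    fun s a => (hDlog s a).fderiv
  -- derivative of the approximate value function
  have hV : ∀ s, HasFDerivAt (fun θ' => ∑ a, πf θ' s a * Qt θ' s a)
      (∑ a, (πf θ s a • fderiv ℝ (fun θ' => Qt θ' s a) θ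
        + Qt θ s a • fderiv ℝ (fun θ' => πf θ' s a) θ)) θ :=
    fun s => HasFDerivAt.fun_sum fun a _ =>
      ((hdiff s a) θ).hasFDerivAt.mul ((hQdiff s a) θ).hasFDerivAt
  have hDV : ∀ s, fderiv ℝ (fun θ' => ∑ a, πf θ' s a * Qt θ' s a) θ
      = ∑ a, (πf θ s a • fderiv ℝ (fun θ' => Qt θ' s a) θ
        + Qt θ s a • fderiv ℝ (fun θ' => πf θ' s a) θ) := fun s => (hV s).fderiv
  -- the policy-derivative sums to zero
  have hsum0 : ∀ s, ∑ a, fderiv ℝ (fun θ' => πf θ' s a) θ = 0 := by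
    intro s
    have h1 : HasFDerivAt (fun θ' => ∑ a, πf θ' s a)
        (∑ a, fderiv ℝ (fun θ' => πf θ' s a) θ) θ :=
      HasFDerivAt.fun_sum fun a _ => ((hdiff s a) θ).hasFDerivAt
    have h2 : (fun θ' : Fin d → ℝ => ∑ a, πf θ' s a) = fun _ => (1:ℝ) :=
      funext fun θ' => (hpol θ').2 s
    rw [h2] at h1
    exact h1.unique (hasFDerivAt_const 1 θ)
  -- derivative of the trajectory probability (policy gradient identity)
  have hprob : ∀ τ : M.Traj, HasFDerivAt (fun θ' => M.prob (πf θ') τ)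
      (M.prob (πf θ) τ • ∑ t ∈ range (M.T + 1),
        fderiv ℝ (fun θ' => Real.log (πf θ' (M.st τ t) (M.ac τ t))) θ) θ := by
    intro τ
    have h1 := HasFDerivAt.const_mul
      (HasFDerivAt.finset_prod (u := range (M.T + 1))
        (fun t _ => (((hdiff (M.st τ t) (M.ac τ t)) θ).hasFDerivAt.mul_const
            (M.Rd (M.st τ t) (M.ac τ t) (τ.2.2 ⟨min t M.T, by omega⟩))).mul_const
          (M.P (M.st τ t) (M.ac τ t) (M.st τ (t + 1)))))
      (if M.st τ 0 = M.s0 then (1:ℝ) else 0)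
    refine HasFDerivAt.congr_fderiv h1 ?_
    rw [Finset.smul_sum, Finset.smul_sum]
    refine Finset.sum_congr rfl fun t htm => ?_
    rw [hDL]
    rw [smul_smul, smul_smul, smul_smul, smul_smul]
    congr 1
    have hπne : πf θ (M.st τ t) (M.ac τ t) ≠ 0 := ne_of_gt (hpos θ _ _)
    have hsplit : M.prob (πf θ) τ = (if M.st τ 0 = M.s0 then (1:ℝ) else 0) *
        ((πf θ (M.st τ t) (M.ac τ t) *
            M.Rd (M.st τ t) (M.ac τ t) (τ.2.2 ⟨min t M.T, by omega⟩) *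
            M.P (M.st τ t) (M.ac τ t) (M.st τ (t + 1))) *
          ∏ j ∈ (range (M.T + 1)).erase t,
            (πf θ (M.st τ j) (M.ac τ j) *
              M.Rd (M.st τ j) (M.ac τ j) (τ.2.2 ⟨min j M.T, by omega⟩) *
              M.P (M.st τ j) (M.ac τ j) (M.st τ (j + 1)))) := by
      unfold FinMDP.prob
      congr 1
      exact (Finset.mul_prod_erase _ _ htm).symm
    rw [hsplit]
    generalize (if M.st τ 0 = M.s0 then (1:ℝ) else 0) = c
    field_simp
  -- derivative of J
  have hJ : HasFDerivAt (fun θ' => M.J (πf θ'))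
      (∑ τ : M.Traj, M.ret τ • (M.prob (πf θ) τ • ∑ t ∈ range (M.T + 1),
        fderiv ℝ (fun θ' => Real.log (πf θ' (M.st τ t) (M.ac τ t))) θ)) θ := by
    have h1 : (fun θ' => M.J (πf θ'))
        = fun θ' => ∑ τ : M.Traj, M.prob (πf θ') τ * M.ret τ := rfl
    rw [h1]
    exact HasFDerivAt.fun_sum fun τ _ => (hprob τ).mul_const (M.ret τ)
  rw [hJ.fderiv]
  -- reduce to a scalar identity
  refine ContinuousLinearMap.ext fun v => ?_
  simp only [ContinuousLinearMap.sum_apply, ContinuousLinearMap.smul_apply,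
    ContinuousLinearMap.add_apply, ContinuousLinearMap.sub_apply, smul_eq_mul]
  -- scalar derivative facts
  have hDLv : ∀ s a, πf θ s a * fderiv ℝ (fun θ' => Real.log (πf θ' s a)) θ v
      = fderiv ℝ (fun θ' => πf θ' s a) θ v := by
    intro s a
    rw [hDL]
    simp only [ContinuousLinearMap.smul_apply, smul_eq_mul]
    rw [mul_inv_cancel_left₀ (ne_of_gt (hpos θ s a))]
  have hsum0v : ∀ s, ∑ a, fderiv ℝ (fun θ' => πf θ' s a) θ v = 0 := by
    intro s
    have := congrArg (fun L : (Fin d → ℝ) →L[ℝ] ℝ => L v) (hsum0 s)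
    simpa [ContinuousLinearMap.sum_apply] using this
  have hDVv : ∀ s, fderiv ℝ (fun θ' => ∑ a, πf θ' s a * Qt θ' s a) θ v
      = ∑ a, (πf θ s a * fderiv ℝ (fun θ' => Qt θ' s a) θ v
        + Qt θ s a * fderiv ℝ (fun θ' => πf θ' s a) θ v) := by
    intro s
    have := congrArg (fun L : (Fin d → ℝ) →L[ℝ] ℝ => L v) (hDV s)
    simpa [ContinuousLinearMap.sum_apply, ContinuousLinearMap.add_apply,
      ContinuousLinearMap.smul_apply, smul_eq_mul] using this
  -- the three vanishing expectations
  have Za : ∀ t, t ≤ M.T → ∑ τ : M.Traj, M.prob (πf θ) τ *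
      ((∑ t1 ∈ range t, M.γ ^ t1 * M.rew τ t1) *
        fderiv ℝ (fun θ' => Real.log (πf θ' (M.st τ t) (M.ac τ t))) θ v) = 0 := by
    intro t ht
    refine exp_zero M (πf θ) hM hπ ht _ ?_
      (fun s a => fderiv ℝ (fun θ' => Real.log (πf θ' s a)) θ v) ?_
    · intro τ τ' h1 h2 h3
      exact Finset.sum_congr rfl fun t1 ht1 => by rw [h3 t1 (mem_range.mp ht1)]
    · intro s
      rw [Finset.sum_congr rfl fun a _ => hDLv s a]
      exact hsum0v s
  have Zb : ∀ t t2, t < t2 → t2 ≤ M.T → ∑ τ : M.Traj, M.prob (πf θ) τ *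
      ((fderiv ℝ (fun θ' => Real.log (πf θ' (M.st τ t) (M.ac τ t))) θ v * M.γ ^ t2) *
        ((∑ a, πf θ (M.st τ t2) a * Qt θ (M.st τ t2) a)
          - Qt θ (M.st τ t2) (M.ac τ t2))) = 0 := by
    intro t t2 htt ht2
    refine exp_zero M (πf θ) hM hπ ht2 _ ?_
      (fun s a => (∑ a', πf θ s a' * Qt θ s a') - Qt θ s a) ?_
    · intro τ τ' h1 h2 h3
      rw [h1 t (by omega), h2 t (by omega)]
    · intro s
      have h4 : ∑ a, πf θ s a * ((∑ a', πf θ s a' * Qt θ s a') - Qt θ s a)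
          = (∑ a, πf θ s a * (∑ a', πf θ s a' * Qt θ s a')) - ∑ a, πf θ s a * Qt θ s a := by
        rw [← Finset.sum_sub_distrib]
        exact Finset.sum_congr rfl fun a _ => mul_sub _ _ _
      rw [h4, ← Finset.sum_mul, hπ.2, one_mul, sub_self]
  have Zc : ∀ t, t ≤ M.T → ∑ τ : M.Traj, M.prob (πf θ) τ *
      (M.γ ^ t * (fderiv ℝ (fun θ' => ∑ a, πf θ' (M.st τ t) a * Qt θ' (M.st τ t) a) θ v
        - fderiv ℝ (fun θ' => Qt θ' (M.st τ t) (M.ac τ t)) θ v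
        - Qt θ (M.st τ t) (M.ac τ t) *
            fderiv ℝ (fun θ' => Real.log (πf θ' (M.st τ t) (M.ac τ t))) θ v)) = 0 := by
    intro t ht
    refine exp_zero M (πf θ) hM hπ ht (fun _ => M.γ ^ t) (fun _ _ _ _ _ => rfl)
      (fun s a => fderiv ℝ (fun θ' => ∑ a', πf θ' s a' * Qt θ' s a') θ v
        - fderiv ℝ (fun θ' => Qt θ' s a) θ v
        - Qt θ s a * fderiv ℝ (fun θ' => Real.log (πf θ' s a)) θ v) ?_
    intro s
    have h5 : ∀ a, πf θ s a *
        (fderiv ℝ (fun θ' => ∑ a', πf θ' s a' * Qt θ' s a') θ v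
          - fderiv ℝ (fun θ' => Qt θ' s a) θ v
          - Qt θ s a * fderiv ℝ (fun θ' => Real.log (πf θ' s a)) θ v)
        = πf θ s a * fderiv ℝ (fun θ' => ∑ a', πf θ' s a' * Qt θ' s a') θ v
          - (πf θ s a * fderiv ℝ (fun θ' => Qt θ' s a) θ v
            + Qt θ s a * (πf θ s a * fderiv ℝ (fun θ' => Real.log (πf θ' s a)) θ v)) := by
      intro a; ring
    rw [Finset.sum_congr rfl fun a _ => h5 a]
    rw [Finset.sum_congr rfl fun a _ => by rw [hDLv s a]]
    rw [Finset.sum_sub_distrib, ← Finset.sum_mul, hπ.2, one_mul, hDVv s, sub_self]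
  -- assemble
  simp only [Finset.mul_sum]
  rw [Finset.sum_comm]
  have hRHS : ∀ τ : M.Traj, ∀ t, M.ret τ *
      (M.prob (πf θ) τ * fderiv ℝ (fun θ' => Real.log (πf θ' (M.st τ t) (M.ac τ t))) θ v)
      = M.prob (πf θ) τ * (M.ret τ * fderiv ℝ (fun θ' => Real.log (πf θ' (M.st τ t) (M.ac τ t))) θ v) := by
    intro τ t; ring
  rw [show (∑ τ : M.Traj, ∑ t ∈ range (M.T+1), M.ret τ *
      (M.prob (πf θ) τ * fderiv ℝ (fun θ' => Real.log (πf θ' (M.st τ t) (M.ac τ t))) θ v))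
      = ∑ t ∈ range (M.T+1), ∑ τ : M.Traj, M.prob (πf θ) τ *
        (M.ret τ * fderiv ℝ (fun θ' => Real.log (πf θ' (M.st τ t) (M.ac τ t))) θ v) from by
    rw [Finset.sum_comm]
    exact Finset.sum_congr rfl fun t _ => Finset.sum_congr rfl fun τ _ => hRHS τ t]
  refine Finset.sum_congr rfl fun t htr => ?_
  have ht : t ≤ M.T := by have := mem_range.mp htr; omega
  -- split the return into past and future
  have hretsplit : ∀ τ : M.Traj, M.ret τ
      = (∑ t1 ∈ range t, M.γ ^ t1 * M.rew τ t1) + ∑ t1 ∈ Finset.Icc t M.T, M.γ ^ t1 * M.rew τ t1 := by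
    intro τ
    unfold FinMDP.ret
    rw [← Finset.sum_range_add_sum_Ico _ (show t ≤ M.T + 1 by omega), Finset.Ico_add_one_right_eq_Icc]
  -- the B-term vanishes
  have hZb : ∑ τ : M.Traj, M.prob (πf θ) τ *
      ((∑ t2 ∈ Finset.Icc (t + 1) M.T, M.γ ^ t2 *
          ((∑ a, πf θ (M.st τ t2) a * Qt θ (M.st τ t2) a) - Qt θ (M.st τ t2) (M.ac τ t2))) *
        fderiv ℝ (fun θ' => Real.log (πf θ' (M.st τ t) (M.ac τ t))) θ v) = 0 := by
    have h6 : ∀ τ : M.Traj, M.prob (πf θ) τ *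
        ((∑ t2 ∈ Finset.Icc (t + 1) M.T, M.γ ^ t2 *
            ((∑ a, πf θ (M.st τ t2) a * Qt θ (M.st τ t2) a) - Qt θ (M.st τ t2) (M.ac τ t2))) *
          fderiv ℝ (fun θ' => Real.log (πf θ' (M.st τ t) (M.ac τ t))) θ v)
        = ∑ t2 ∈ Finset.Icc (t + 1) M.T, M.prob (πf θ) τ *
            ((fderiv ℝ (fun θ' => Real.log (πf θ' (M.st τ t) (M.ac τ t))) θ v * M.γ ^ t2) *
              ((∑ a, πf θ (M.st τ t2) a * Qt θ (M.st τ t2) a) - Qt θ (M.st τ t2) (M.ac τ t2))) := by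
      intro τ
      rw [Finset.sum_mul, Finset.mul_sum]
      exact Finset.sum_congr rfl fun t2 _ => by ring
    rw [Finset.sum_congr rfl fun τ _ => h6 τ, Finset.sum_comm]
    refine Finset.sum_eq_zero fun t2 ht2 => ?_
    have h7 := Finset.mem_Icc.mp ht2
    exact Zb t t2 (by omega) h7.2
  -- final per-time-step computation
  have key : ∀ τ : M.Traj, M.prob (πf θ) τ *
      (((∑ t1 ∈ Finset.Icc t M.T, M.γ ^ t1 * M.rew τ t1)
          + ∑ t2 ∈ Finset.Icc (t + 1) M.T, M.γ ^ t2 *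
              ((∑ a, πf θ (M.st τ t2) a * Qt θ (M.st τ t2) a) - Qt θ (M.st τ t2) (M.ac τ t2))) *
        fderiv ℝ (fun θ' => Real.log (πf θ' (M.st τ t) (M.ac τ t))) θ v
        + M.γ ^ t * (fderiv ℝ (fun θ' => ∑ a, πf θ' (M.st τ t) a * Qt θ' (M.st τ t) a) θ v
          - fderiv ℝ (fun θ' => Qt θ' (M.st τ t) (M.ac τ t)) θ v
          - Qt θ (M.st τ t) (M.ac τ t) *
              fderiv ℝ (fun θ' => Real.log (πf θ' (M.st τ t) (M.ac τ t))) θ v))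
      = M.prob (πf θ) τ *
          ((∑ t1 ∈ Finset.Icc t M.T, M.γ ^ t1 * M.rew τ t1) *
            fderiv ℝ (fun θ' => Real.log (πf θ' (M.st τ t) (M.ac τ t))) θ v)
        + (M.prob (πf θ) τ *
            ((∑ t2 ∈ Finset.Icc (t + 1) M.T, M.γ ^ t2 *
                ((∑ a, πf θ (M.st τ t2) a * Qt θ (M.st τ t2) a) - Qt θ (M.st τ t2) (M.ac τ t2))) *
              fderiv ℝ (fun θ' => Real.log (πf θ' (M.st τ t) (M.ac τ t))) θ v)
          + M.prob (πf θ) τ *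
              (M.γ ^ t * (fderiv ℝ (fun θ' => ∑ a, πf θ' (M.st τ t) a * Qt θ' (M.st τ t) a) θ v
                - fderiv ℝ (fun θ' => Qt θ' (M.st τ t) (M.ac τ t)) θ v
                - Qt θ (M.st τ t) (M.ac τ t) *
                    fderiv ℝ (fun θ' => Real.log (πf θ' (M.st τ t) (M.ac τ t))) θ v))) := by
    intro τ; ring
  have keyR : ∀ τ : M.Traj, M.prob (πf θ) τ *
      (M.ret τ * fderiv ℝ (fun θ' => Real.log (πf θ' (M.st τ t) (M.ac τ t))) θ v)
      = M.prob (πf θ) τ *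
          ((∑ t1 ∈ Finset.Icc t M.T, M.γ ^ t1 * M.rew τ t1) *
            fderiv ℝ (fun θ' => Real.log (πf θ' (M.st τ t) (M.ac τ t))) θ v)
        + M.prob (πf θ) τ *
            ((∑ t1 ∈ range t, M.γ ^ t1 * M.rew τ t1) *
              fderiv ℝ (fun θ' => Real.log (πf θ' (M.st τ t) (M.ac τ t))) θ v) := by
    intro τ
    rw [hretsplit τ]
    ring
  rw [Finset.sum_congr rfl fun τ _ => key τ, Finset.sum_congr rfl fun τ _ => keyR τ,
    Finset.sum_add_distrib, Finset.sum_add_distrib, Finset.sum_add_distrib,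
    hZb, Zc t ht, Za t ht]
  norm_num
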